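/- arXiv:2310.14145 — 4 statements merged into one kernel-verified Lean document; each statement's English description precedes it below -/
import Mathlib

section
/- The group G acts transitively on the n-th level of the binary rooted tree for every n ≥ 1; that is, for every n and every pair of words u, v ∈ {0,1}^n of length n there exists g ∈ G with g(u) = v. -/
namespace BVTree

/-- States of the automaton (generators, their inverses, and the identity). -/
inductive Q : Type
  | e | qa | qb | qc | qd | qa' | qb' | qc' | qd'
  deriving DecidableEq

open Q

/-- Output function of the automaton. -/
def Qout : Q → Bool → Bool
  | qa, x => !x
  | qa', x => !x
  | _, x => x

/-- Transition function of the automaton. -/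
def Qtrans : Q → Bool → Q
  | qa, false => qd
  | qa, true => e
  | qb, false => qa
  | qb, true => qc
  | qc, _ => qa
  | qd, false => e
  | qd, true => qb
  | qa', false => e
  | qa', true => qd'
  | qb', false => qa'
  | qb', true => qc'
  | qc', _ => qa'
  | qd', false => e
  | qd', true => qb'
  | e, _ => e

/-- The state corresponding to the inverse automorphism. -/
def Qinv : Q → Q
  | e => e
  | qa => qa' | qb => qb' | qc => qc' | qd => qd'
  | qa' => qa | qb' => qb | qc' => qc | qd' => qd

/-- The action of a state on finite binary words. -/
def act : Q → List Bool → List Bool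
  | _, [] => []
  | q, x :: w => Qout q x :: act (Qtrans q x) w

lemma act_inv (q : Q) : ∀ w, act (Qinv q) (act q w) = w := by
  intro w
  induction w generalizing q with
  | nil => rfl
  | cons x w ih =>
    have h1 : Qout (Qinv q) (Qout q x) = x := by cases q <;> cases x <;> rfl
    have h2 : Qtrans (Qinv q) (Qout q x) = Qinv (Qtrans q x) := by
      cases q <;> cases x <;> rfl
    simp [act, h1, h2, ih]

/-- The tree automorphism determined by a state of the automaton. -/
def aut (q : Q) : Equiv.Perm (List Bool) where
  toFun := act q
  invFun := act (Qinv q)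
  left_inv := act_inv q
  right_inv := by
    intro w
    have h : Qinv (Qinv q) = q := by cases q <;> rfl
    simpa [h] using act_inv (Qinv q) w

/-- The automorphism `a`: `a(0w) = 1·d(w)`, `a(1w) = 0·w`. -/
def a : Equiv.Perm (List Bool) := aut qa
/-- The automorphism `b`: `b(0w) = 0·a(w)`, `b(1w) = 1·c(w)`. -/
def b : Equiv.Perm (List Bool) := aut qb
/-- The automorphism `c`: `c(0w) = 0·a(w)`, `c(1w) = 1·a(w)`. -/
def c : Equiv.Perm (List Bool) := aut qc
/-- The automorphism `d`: `d(0w) = 0·w`, `d(1w) = 1·b(w)`. -/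
def d : Equiv.Perm (List Bool) := aut qd

/-- The group `G` generated by `a`, `b`, `c`, `d`. -/
def G : Subgroup (Equiv.Perm (List Bool)) := Subgroup.closure {a, b, c, d}


lemma act_e : ∀ w, act e w = w
  | [] => rfl
  | x :: w => by simp [act, Qout, Qtrans, act_e w]

lemma act_length (q : Q) : ∀ w, (act q w).length = w.length
  | [] => rfl
  | x :: w => by simp [act, act_length _ w]

lemma aut_apply (q : Q) (w : List Bool) : aut q w = act q w := rfl

lemma aut_inv_apply (q : Q) (w : List Bool) : (aut q)⁻¹ w = act (Qinv q) w := rfl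

lemma haG : a ∈ G := Subgroup.subset_closure (by simp)
lemma hbG : b ∈ G := Subgroup.subset_closure (by simp)
lemma hcG : c ∈ G := Subgroup.subset_closure (by simp)
lemma hdG : d ∈ G := Subgroup.subset_closure (by simp)

/-- Self-replication: every element of `G` appears as a section of an element of `G`
fixing the first level. -/
lemma section_lemma (x : Bool) (g : Equiv.Perm (List Bool)) (hg : g ∈ G) :
    ∃ h ∈ G, ∀ w, h (x :: w) = x :: g w := by
  induction hg using Subgroup.closure_induction with
  | mem g hgmem =>
    simp only [Set.mem_insert_iff, Set.mem_singleton_iff] at hgmem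
    rcases hgmem with rfl | rfl | rfl | rfl <;> cases x
    · exact ⟨b, hbG, fun w => rfl⟩
    · exact ⟨c, hcG, fun w => rfl⟩
    · refine ⟨a * d * a⁻¹, mul_mem (mul_mem haG hdG) (inv_mem haG), fun w => ?_⟩
      show a (d (a⁻¹ (false :: w))) = _
      rw [show a⁻¹ (false :: w) = true :: act e w from rfl, act_e,
        show d (true :: w) = true :: b w from rfl,
        show a (true :: b w) = false :: act e (b w) from rfl, act_e]
    · exact ⟨d, hdG, fun w => rfl⟩
    · refine ⟨a * b * a⁻¹, mul_mem (mul_mem haG hbG) (inv_mem haG), fun w => ?_⟩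
      show a (b (a⁻¹ (false :: w))) = _
      rw [show a⁻¹ (false :: w) = true :: act e w from rfl, act_e,
        show b (true :: w) = true :: c w from rfl,
        show a (true :: c w) = false :: act e (c w) from rfl, act_e]
    · exact ⟨b, hbG, fun w => rfl⟩
    · refine ⟨a * a, mul_mem haG haG, fun w => ?_⟩
      show a (a (false :: w)) = _
      rw [show a (false :: w) = true :: d w from rfl,
        show a (true :: d w) = false :: act e (d w) from rfl, act_e]
    · refine ⟨a * a, mul_mem haG haG, fun w => ?_⟩
      show a (a (true :: w)) = _
      rw [show a (true :: w) = false :: act e w from rfl, act_e]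
      rfl
  | one => exact ⟨1, one_mem G, fun w => rfl⟩
  | mul g1 g2 _ _ ih1 ih2 =>
    obtain ⟨h1, h1G, hh1⟩ := ih1
    obtain ⟨h2, h2G, hh2⟩ := ih2
    refine ⟨h1 * h2, mul_mem h1G h2G, fun w => ?_⟩
    simp [Equiv.Perm.mul_apply, hh1, hh2]
  | inv g1 _ ih =>
    obtain ⟨h1, h1G, hh1⟩ := ih
    refine ⟨h1⁻¹, inv_mem h1G, fun w => ?_⟩
    have := hh1 (g1⁻¹ w)
    simp at this
    rw [← this, ← Equiv.Perm.mul_apply, inv_mul_cancel, Equiv.Perm.one_apply]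
    rfl

/-- `G` acts transitively on every level `n ≥ 1` of the binary rooted tree. -/
theorem level_transitive (n : ℕ) (hn : 1 ≤ n) (u v : List Bool)
    (hu : u.length = n) (hv : v.length = n) :
    ∃ g ∈ G, g u = v := by
  clear hn
  induction n generalizing u v with
  | zero =>
    rw [List.length_eq_zero_iff] at hu hv
    exact ⟨1, one_mem G, by simp [hu, hv]⟩
  | succ n ih =>
    match u, v with
    | x :: u', y :: v' =>
      simp only [List.length_cons, Nat.succ.injEq] at hu hv
      -- first move the first letter into place
      obtain ⟨g0, hg0G, u'', hu''len, hg0⟩ :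
          ∃ g0 ∈ G, ∃ u'', u''.length = n ∧ g0 (x :: u') = y :: u'' := by
        match x, y with
        | false, false => exact ⟨1, one_mem G, u', hu, rfl⟩
        | true, true => exact ⟨1, one_mem G, u', hu, rfl⟩
        | false, true =>
          exact ⟨a, haG, act qd u', by rw [act_length, hu], rfl⟩
        | true, false =>
          exact ⟨a⁻¹, inv_mem haG, act qd' u', by rw [act_length, hu], rfl⟩
      obtain ⟨g1, hg1G, hg1⟩ := ih u'' v' hu''len hv
      obtain ⟨h, hhG, hh⟩ := section_lemma y g1 hg1G
      refine ⟨h * g0, mul_mem hhG hg0G, ?_⟩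
      rw [Equiv.Perm.mul_apply, hg0, hh, hg1]

end BVTree
end

section
/- For every k ≥ 1, the commutator [a, c^{-2^k}] = a⁻¹·c^{2^k}·a·c^{-2^k} is a nontrivial element of the rigid stabilizer Rist_G((0111)^k) of the vertex (0111)^k, the word of length 4k obtained by concatenating k copies of 0111; that is, [a, c^{-2^k}] ≠ 1 and [a, c^{-2^k}] fixes every word that does not have (0111)^k as a prefix. -/
namespace BVTree

open Q

/-! ### Auxiliary lemmas -/

section Aux

lemma act_e_eq (w : List Bool) : act e w = w := by
  induction w with
  | nil => rfl
  | cons x w ih => cases x <;> simp [act, Qout, Qtrans, ih]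

lemma a_f (w : List Bool) : a (false :: w) = true :: d w := rfl

lemma a_t (w : List Bool) : a (true :: w) = false :: w := by
  show false :: act e w = false :: w
  rw [act_e_eq]

lemma c_cons (x : Bool) (w : List Bool) : c (x :: w) = x :: a w := by
  cases x <;> rfl

lemma d_f (w : List Bool) : d (false :: w) = false :: w := by
  show false :: act e w = false :: w
  rw [act_e_eq]

lemma d_t (w : List Bool) : d (true :: w) = true :: b w := rfl

lemma b_f (w : List Bool) : b (false :: w) = false :: a w := rfl

lemma b_t (w : List Bool) : b (true :: w) = true :: c w := rfl

lemma a2_cons (x : Bool) (w : List Bool) : a (a (x :: w)) = x :: d w := by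
  cases x
  · rw [a_f, a_t]
  · rw [a_t, a_f]

lemma inv_cons {f g : Equiv.Perm (List Bool)} {x y : Bool}
    (h : ∀ w, f (x :: w) = y :: g w) (v : List Bool) :
    f⁻¹ (y :: v) = x :: g⁻¹ v := by
  apply f.injective
  rw [Equiv.Perm.eq_inv_iff_eq.mp rfl, h, Equiv.Perm.eq_inv_iff_eq.mp rfl]

lemma inv_cons_id {f : Equiv.Perm (List Bool)} {x : Bool}
    (h : ∀ w, f (x :: w) = x :: w) (v : List Bool) :
    f⁻¹ (x :: v) = x :: v := by
  apply f.injective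
  rw [Equiv.Perm.eq_inv_iff_eq.mp rfl, h]

lemma ainv_f (v : List Bool) : a⁻¹ (false :: v) = true :: v := by
  apply a.injective
  rw [Equiv.Perm.eq_inv_iff_eq.mp rfl, a_t]

lemma ainv_t (v : List Bool) : a⁻¹ (true :: v) = false :: d⁻¹ v :=
  inv_cons a_f v

lemma dinv_t (v : List Bool) : d⁻¹ (true :: v) = true :: b⁻¹ v :=
  inv_cons d_t v

lemma binv_f (v : List Bool) : b⁻¹ (false :: v) = false :: a⁻¹ v :=
  inv_cons b_f v

lemma binv_t (v : List Bool) : b⁻¹ (true :: v) = true :: c⁻¹ v :=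
  inv_cons b_t v

lemma cinv_cons (x : Bool) (v : List Bool) : c⁻¹ (x :: v) = x :: a⁻¹ v :=
  inv_cons (c_cons x) v

lemma c_pow_cons (n : ℕ) (x : Bool) (w : List Bool) :
    (c ^ n) (x :: w) = x :: (a ^ n) w := by
  induction n generalizing w with
  | zero => simp
  | succ n ih =>
    rw [pow_succ, Equiv.Perm.mul_apply, c_cons, ih, pow_succ, Equiv.Perm.mul_apply]

lemma d_pow_f (n : ℕ) (w : List Bool) : (d ^ n) (false :: w) = false :: w := by
  induction n with
  | zero => simp
  | succ n ih => rw [pow_succ, Equiv.Perm.mul_apply, d_f, ih]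

lemma d_pow_t (n : ℕ) (w : List Bool) : (d ^ n) (true :: w) = true :: (b ^ n) w := by
  induction n generalizing w with
  | zero => simp
  | succ n ih =>
    rw [pow_succ, Equiv.Perm.mul_apply, d_t, ih, pow_succ, Equiv.Perm.mul_apply]

lemma b_pow_f (n : ℕ) (w : List Bool) : (b ^ n) (false :: w) = false :: (a ^ n) w := by
  induction n generalizing w with
  | zero => simp
  | succ n ih =>
    rw [pow_succ, Equiv.Perm.mul_apply, b_f, ih, pow_succ, Equiv.Perm.mul_apply]

lemma b_pow_t (n : ℕ) (w : List Bool) : (b ^ n) (true :: w) = true :: (c ^ n) w := by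
  induction n generalizing w with
  | zero => simp
  | succ n ih =>
    rw [pow_succ, Equiv.Perm.mul_apply, b_t, ih, pow_succ, Equiv.Perm.mul_apply]

lemma a_pow_even (n : ℕ) (x : Bool) (w : List Bool) :
    (a ^ (2 * n)) (x :: w) = x :: (d ^ n) w := by
  induction n generalizing w with
  | zero => simp
  | succ n ih =>
    have h2 : 2 * (n + 1) = 2 * n + 2 := by ring
    rw [h2, pow_add, Equiv.Perm.mul_apply, pow_two, Equiv.Perm.mul_apply, a2_cons, ih,
      pow_succ, Equiv.Perm.mul_apply]

/-- the commutator family -/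
def gP (n : ℕ) : Equiv.Perm (List Bool) := a⁻¹ * c ^ n * a * (c ^ n)⁻¹

def hP (n : ℕ) : Equiv.Perm (List Bool) := d⁻¹ * a ^ n * d * (a ^ n)⁻¹

def h2P (n : ℕ) : Equiv.Perm (List Bool) := b⁻¹ * d ^ n * b * (d ^ n)⁻¹

def h3P (n : ℕ) : Equiv.Perm (List Bool) := c⁻¹ * b ^ n * c * (b ^ n)⁻¹

lemma gP_apply (n : ℕ) (u : List Bool) :
    gP n u = a⁻¹ ((c ^ n) (a ((c ^ n)⁻¹ u))) := by
  simp [gP, Equiv.Perm.mul_apply]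

lemma hP_apply (n : ℕ) (u : List Bool) :
    hP n u = d⁻¹ ((a ^ n) (d ((a ^ n)⁻¹ u))) := by
  simp [hP, Equiv.Perm.mul_apply]

lemma h2P_apply (n : ℕ) (u : List Bool) :
    h2P n u = b⁻¹ ((d ^ n) (b ((d ^ n)⁻¹ u))) := by
  simp [h2P, Equiv.Perm.mul_apply]

lemma h3P_apply (n : ℕ) (u : List Bool) :
    h3P n u = c⁻¹ ((b ^ n) (c ((b ^ n)⁻¹ u))) := by
  simp [h3P, Equiv.Perm.mul_apply]

lemma gP_t (n : ℕ) (w : List Bool) : gP n (true :: w) = true :: w := by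
  rw [gP_apply, inv_cons (c_pow_cons n true), a_t, c_pow_cons, ainv_f,
    Equiv.Perm.eq_inv_iff_eq.mp rfl]

lemma gP_f (n : ℕ) (w : List Bool) : gP n (false :: w) = false :: hP n w := by
  rw [gP_apply, inv_cons (c_pow_cons n false), a_f, c_pow_cons, ainv_t, hP_apply]

lemma hP_even_f (m : ℕ) (w : List Bool) : hP (2 * m) (false :: w) = false :: w := by
  rw [hP_apply, inv_cons (a_pow_even m false), d_f, a_pow_even,
    inv_cons_id d_f, Equiv.Perm.eq_inv_iff_eq.mp rfl]

lemma hP_even_t (m : ℕ) (w : List Bool) :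
    hP (2 * m) (true :: w) = true :: h2P m w := by
  rw [hP_apply, inv_cons (a_pow_even m true), d_t, a_pow_even, dinv_t, h2P_apply]

lemma h2P_f (m : ℕ) (w : List Bool) : h2P m (false :: w) = false :: w := by
  rw [h2P_apply, inv_cons_id (d_pow_f m), b_f, d_pow_f, binv_f,
    Equiv.Perm.inv_eq_iff_eq.mpr rfl]

lemma h2P_t (m : ℕ) (w : List Bool) : h2P m (true :: w) = true :: h3P m w := by
  rw [h2P_apply, inv_cons (d_pow_t m), b_t, d_pow_t, binv_t, h3P_apply]

lemma h3P_f (m : ℕ) (w : List Bool) : h3P m (false :: w) = false :: w := by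
  rw [h3P_apply, inv_cons (b_pow_f m), c_cons, b_pow_f, cinv_cons]
  have key : (a⁻¹ * a ^ m * a * (a ^ m)⁻¹ : Equiv.Perm (List Bool)) = 1 := by group
  have : a⁻¹ ((a ^ m) (a ((a ^ m)⁻¹ w))) =
      (a⁻¹ * a ^ m * a * (a ^ m)⁻¹ : Equiv.Perm (List Bool)) w := by
    simp [Equiv.Perm.mul_apply]
  rw [this, key, Equiv.Perm.one_apply]

lemma h3P_t (m : ℕ) (w : List Bool) : h3P m (true :: w) = true :: gP m w := by
  rw [h3P_apply, inv_cons (b_pow_t m), c_cons, b_pow_t, cinv_cons, gP_apply]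

lemma mul_nil {f g : Equiv.Perm (List Bool)} (hf : f [] = []) (hg : g [] = []) :
    (f * g) [] = [] := by rw [Equiv.Perm.mul_apply, hg, hf]

lemma inv_nil {f : Equiv.Perm (List Bool)} (hf : f [] = []) : f⁻¹ [] = [] := by
  apply f.injective; rw [Equiv.Perm.eq_inv_iff_eq.mp rfl, hf]

lemma pow_nil {f : Equiv.Perm (List Bool)} (hf : f [] = []) (n : ℕ) :
    (f ^ n) [] = [] := by
  induction n with
  | zero => simp
  | succ n ih => rw [pow_succ]; exact mul_nil ih hf

lemma a_nil : a [] = [] := rfl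
lemma b_nil : b [] = [] := rfl
lemma c_nil : c [] = [] := rfl
lemma d_nil : d [] = [] := rfl

lemma gP_nil (n : ℕ) : gP n [] = [] :=
  mul_nil (mul_nil (mul_nil (inv_nil a_nil) (pow_nil c_nil n)) a_nil)
    (inv_nil (pow_nil c_nil n))

lemma hP_nil (n : ℕ) : hP n [] = [] :=
  mul_nil (mul_nil (mul_nil (inv_nil d_nil) (pow_nil a_nil n)) d_nil)
    (inv_nil (pow_nil a_nil n))

lemma h2P_nil (n : ℕ) : h2P n [] = [] :=
  mul_nil (mul_nil (mul_nil (inv_nil b_nil) (pow_nil d_nil n)) b_nil)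
    (inv_nil (pow_nil d_nil n))

lemma h3P_nil (n : ℕ) : h3P n [] = [] :=
  mul_nil (mul_nil (mul_nil (inv_nil c_nil) (pow_nil b_nil n)) c_nil)
    (inv_nil (pow_nil b_nil n))

lemma rec_step (m : ℕ) (w : List Bool) :
    gP (2 * m) ([false, true, true, true] ++ w)
      = [false, true, true, true] ++ gP m w := by
  show gP (2 * m) (false :: true :: true :: true :: w) = _
  rw [gP_f, hP_even_t, h2P_t, h3P_t]
  rfl

lemma rec_fix (m : ℕ) : ∀ u : List Bool,
    ¬ ([false, true, true, true] <+: u) → gP (2 * m) u = u := by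
  intro u h
  match u with
  | [] => exact gP_nil _
  | true :: w => exact gP_t _ _
  | false :: [] => rw [gP_f, hP_nil]
  | false :: false :: w => rw [gP_f, hP_even_f]
  | false :: true :: [] => rw [gP_f, hP_even_t, h2P_nil]
  | false :: true :: false :: w => rw [gP_f, hP_even_t, h2P_f]
  | false :: true :: true :: [] => rw [gP_f, hP_even_t, h2P_t, h3P_nil]
  | false :: true :: true :: false :: w => rw [gP_f, hP_even_t, h2P_t, h3P_f]
  | false :: true :: true :: true :: w => exact absurd ⟨w, rfl⟩ h

lemma fixAll : ∀ (k : ℕ) (u : List Bool),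
    ¬ ((List.replicate k [false, true, true, true]).flatten <+: u) →
      gP (2 ^ k) u = u := by
  intro k
  induction k with
  | zero =>
    intro u h
    exact absurd (by simpa using List.nil_prefix (l := u)) h
  | succ k ih =>
    intro u h
    rw [pow_succ']
    by_cases h4 : [false, true, true, true] <+: u
    · obtain ⟨w, rfl⟩ := h4
      rw [rec_step]
      have hw : ¬ ((List.replicate k [false, true, true, true]).flatten <+: w) := by
        intro hw
        apply h
        rw [List.replicate_succ, List.flatten_cons]
        exact ⟨hw.choose, by rw [List.append_assoc, hw.choose_spec]⟩
      rw [ih w hw]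
    · exact rec_fix _ u h4

lemma gP_one : gP 1 [false, false, false, false] = [false, false, false, true] := by
  decide

lemma moves : ∀ k : ℕ,
    gP (2 ^ k) ((List.replicate k [false, true, true, true]).flatten
        ++ [false, false, false, false])
      = (List.replicate k [false, true, true, true]).flatten
        ++ [false, false, false, true] := by
  intro k
  induction k with
  | zero => simpa using gP_one
  | succ k ih =>
    rw [pow_succ', List.replicate_succ, List.flatten_cons, List.append_assoc,
      List.append_assoc, rec_step, ih]

end Aux

/-- for `k ≥ 1`, the commutator `[a, c^{-2^k}]` is a nontrivial element of the
rigid stabilizer of the vertex `(0111)^k`. -/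
theorem commutator_in_rist_iterated (k : ℕ) (hk : 1 ≤ k) :
    (a⁻¹ * c ^ (2 ^ k) * a * (c ^ (2 ^ k))⁻¹ ≠ 1) ∧
    (∀ u : List Bool, ¬ ((List.replicate k [false, true, true, true]).flatten <+: u) →
      (a⁻¹ * c ^ (2 ^ k) * a * (c ^ (2 ^ k))⁻¹) u = u) := by
  have hg : gP (2 ^ k) = a⁻¹ * c ^ (2 ^ k) * a * (c ^ (2 ^ k))⁻¹ := rfl
  constructor
  · intro h1
    have hm := moves k
    rw [hg, h1] at hm
    simp only [Equiv.Perm.one_apply] at hm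
    have := List.append_cancel_left hm
    simp at this
  · intro u hu
    have := fixAll k u hu
    rwa [hg] at this

end BVTree
end

section
/- The following relations hold among the tree automorphisms: the commutators [d, a⁻¹da] and [d, ada⁻¹] are both the identity automorphism; that is, d commutes with each of its conjugates a⁻¹da and ada⁻¹. -/
namespace BVTree

open Q

def step : List Q → Bool → Bool × List Q
  | [], x => (x, [])
  | q :: qs, x =>
    let p := step qs x
    (Qout q p.1, Qtrans q p.1 :: p.2)

def actL : List Q → List Bool → List Bool
  | _, [] => []
  | qs, x :: w => (step qs x).1 :: actL (step qs x).2 w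

lemma actL_nil : ∀ w, actL [] w = w := by
  intro w; induction w with
  | nil => rfl
  | cons x w ih => simp [actL, step, ih]

lemma actL_cons (q : Q) (qs : List Q) (w : List Bool) :
    actL (q :: qs) w = act q (actL qs w) := by
  induction w generalizing q qs with
  | nil => rfl
  | cons x w ih => simp [actL, act, step, ih]

lemma good_of_closed (S : List (List Q))
    (h : ∀ qs ∈ S, ∀ x, (step qs x).1 = x ∧ (step qs x).2 ∈ S) :
    ∀ qs ∈ S, ∀ w, actL qs w = w := by
  intro qs hqs w
  induction w generalizing qs with
  | nil => rfl
  | cons x w ih =>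
    obtain ⟨h1, h2⟩ := h qs hqs x
    simp [actL, h1, ih _ h2]

def S1 : List (List Q) := [
  [qd', qa', qd', qa, qd, qa', qd, qa],
  [e, qd', qb', qd, e, qd', qb, qd],
  [qb', e, e, e, qb, e, e, e],
  [e, e, qa', e, e, e, qa, e],
  [e, qb', qc', qb, e, qb', qc, qb],
  [qa', e, e, e, qa, e, e, e],
  [qc', e, e, e, qc, e, e, e],
  [e, e, qd', e, e, e, qd, e],
  [e, e, e, e, e, e, e, e],
  [e, qa', qa', qa, e, qa', qa, qa],
  [e, qc', qa', qc, e, qc', qa, qc],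
  [qd', e, e, e, qd, e, e, e],
  [e, e, qb', e, e, e, qb, e],
  [e, qd', e, e, e, e, e, qd],
  [e, e, qd', qd, e, qd', qd, e],
  [e, qa', qd', qa, e, qa', qd, qa],
  [e, qa', e, qa, e, qa', e, qa],
  [e, e, qc', e, e, e, qc, e],
  [e, qb', e, e, e, e, e, qb],
  [e, e, qb', qb, e, qb', qb, e],
  [e, qd', e, qd, e, qd', e, qd],
  [e, qa', e, e, e, e, e, qa],
  [e, qc', e, e, e, e, e, qc],
  [e, e, qa', qa, e, qa', qa, e],
  [e, e, qc', qc, e, qc', qc, e],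
  [e, qb', e, qb, e, qb', e, qb],
  [e, qc', e, qc, e, qc', e, qc]
]
def S2 : List (List Q) := [
  [qd', qa, qd', qa', qd, qa, qd, qa'],
  [e, e, qb', e, e, e, qb, e],
  [qb', qd, e, qd', qb, qd, e, qd'],
  [e, e, qa', e, e, e, qa, e],
  [e, e, qc', e, e, e, qc, e],
  [qa', e, e, e, qa, e, e, e],
  [qc', qb, e, qb', qc, qb, e, qb'],
  [e, e, qd', e, e, e, qd, e],
  [e, e, e, e, e, e, e, e],
  [qd', e, e, e, qd, e, e, e],
  [qa', qa, e, qa', qa, qa, e, qa'],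
  [qa', qc, e, qc', qa, qc, e, qc'],
  [qb', e, e, e, qb, e, e, e],
  [qd', qd, e, qd', qd, e, e, e],
  [e, e, e, e, e, qd, e, qd'],
  [qd', qa, e, qa', qd, qa, e, qa'],
  [e, qa, e, qa', e, qa, e, qa'],
  [qc', e, e, e, qc, e, e, e],
  [qb', qb, e, qb', qb, e, e, e],
  [e, e, e, e, e, qb, e, qb'],
  [e, qd, e, qd', e, qd, e, qd'],
  [qa', qa, e, qa', qa, e, e, e],
  [qc', qc, e, qc', qc, e, e, e],
  [e, e, e, e, e, qa, e, qa'],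
  [e, e, e, e, e, qc, e, qc'],
  [e, qb, e, qb', e, qb, e, qb'],
  [e, qc, e, qc', e, qc, e, qc']
]

/-- `d` commutes with its conjugates `a⁻¹da` and `ada⁻¹`
(the commutators `[d, a⁻¹da]` and `[d, ada⁻¹]`, with `[x,y] = x⁻¹y⁻¹xy`, are trivial). -/
theorem d_commutes_with_conjugates :
    d⁻¹ * (a⁻¹ * d * a)⁻¹ * d * (a⁻¹ * d * a) = 1 ∧
    d⁻¹ * (a * d * a⁻¹)⁻¹ * d * (a * d * a⁻¹) = 1 := by
  have key1 : ∀ w, actL [qd', qa', qd', qa, qd, qa', qd, qa] w = w :=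
    good_of_closed S1 (by decide) _ (by decide)
  have key2 : ∀ w, actL [qd', qa, qd', qa', qd, qa, qd, qa'] w = w :=
    good_of_closed S2 (by decide) _ (by decide)
  constructor
  · apply Equiv.ext; intro w
    have h := key1 w
    simp only [actL_cons, actL_nil] at h
    simpa [a, d, mul_inv_rev, Equiv.Perm.mul_apply, aut_apply, aut_inv_apply, Qinv] using h
  · apply Equiv.ext; intro w
    have h := key2 w
    simp only [actL_cons, actL_nil] at h
    simpa [a, d, mul_inv_rev, Equiv.Perm.mul_apply, aut_apply, aut_inv_apply, Qinv] using h


end BVTree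
end

section
/- The automaton generating G has exponential growth of activity: there exist constants C > 0 and λ > 1 such that for every n ≥ 1 the number of words v ∈ {0,1}^n of length n with a|_v ≠ 1 is at least C·λⁿ. -/
namespace BVTree

open Q

/-- State reached after reading a word. -/
def stateAfter (q : Q) (v : List Bool) : Q := v.foldl Qtrans q

lemma stateAfter_append (q : Q) (v w : List Bool) :
    stateAfter q (v ++ w) = stateAfter (stateAfter q v) w := by
  simp [stateAfter, List.foldl_append]

lemma act_append (q : Q) (v w : List Bool) :
    act q (v ++ w) = act q v ++ act (stateAfter q v) w := by
  induction v generalizing q with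
  | nil => rfl
  | cons x v ih => simp [act, ih, stateAfter]

lemma moved (q : Q) (h : q ≠ e) : ∃ w, act q w ≠ w := by
  cases q with
  | e => exact absurd rfl h
  | qa => exact ⟨[false], by decide⟩
  | qa' => exact ⟨[false], by decide⟩
  | qb => exact ⟨[false, false], by decide⟩
  | qb' => exact ⟨[false, false], by decide⟩
  | qc => exact ⟨[false, false], by decide⟩
  | qc' => exact ⟨[false, false], by decide⟩
  | qd => exact ⟨[true, false, false], by decide⟩
  | qd' => exact ⟨[true, false, false], by decide⟩

lemma nontrivial_section (v : List Bool) (h : stateAfter qa v ≠ e) :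
    ∃ w : List Bool, a (v ++ w) ≠ a v ++ w := by
  obtain ⟨w, hw⟩ := moved _ h
  refine ⟨w, ?_⟩
  show act qa (v ++ w) ≠ act qa v ++ w
  rw [act_append]
  simpa using hw

def block (x : Bool) : List Bool := [false, true, true, x]

def enc : List Bool → List Bool
  | [] => []
  | x :: s => block x ++ enc s

lemma enc_length (s : List Bool) : (enc s).length = 4 * s.length := by
  induction s with
  | nil => rfl
  | cons x s ih => simp [enc, block, ih]; ring

lemma enc_injective : Function.Injective enc := by
  intro s t h
  induction s generalizing t with
  | nil =>
    cases t with
    | nil => rfl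
    | cons y t => simp [enc, block] at h
  | cons x s ih =>
    cases t with
    | nil => simp [enc, block] at h
    | cons y t =>
      simp only [enc] at h
      obtain ⟨h1, h2⟩ := List.append_inj h (by simp [block])
      have hx : x = y := by simpa [block] using h1
      rw [hx, ih h2]

lemma stateAfter_block (x : Bool) : stateAfter qa (block x) = qa := by
  cases x <;> rfl

lemma stateAfter_enc (s : List Bool) : stateAfter qa (enc s) = qa := by
  induction s with
  | nil => rfl
  | cons x s ih => rw [enc, stateAfter_append, stateAfter_block, ih]

def pad (r : ℕ) : List Bool := List.take r [false, true, true]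

lemma pad_length (r : ℕ) (h : r ≤ 3) : (pad r).length = r := by
  simp [pad]; omega

lemma stateAfter_pad (r : ℕ) (h : r ≤ 3) : stateAfter qa (pad r) ≠ e := by
  interval_cases r <;> decide

/-- exponential growth of activity: the number of words `v` of length `n`
at which the section of `a` is nontrivial grows at least like `C·λⁿ` for some `C > 0`,
`λ > 1`. -/
theorem exponential_activity :
    ∃ C lam : ℝ, 0 < C ∧ 1 < lam ∧ ∀ n : ℕ, 1 ≤ n →
      C * lam ^ n ≤
        (Nat.card {v : List Bool // v.length = n ∧
          ∃ w : List Bool, a (v ++ w) ≠ a v ++ w} : ℝ) := by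
  refine ⟨1/2, (2:ℝ) ^ ((4:ℝ)⁻¹), by norm_num, ?_, ?_⟩
  · rw [show (1:ℝ) = (2:ℝ) ^ (0:ℝ) by simp]
    exact Real.rpow_lt_rpow_of_exponent_lt (by norm_num) (by norm_num)
  intro n hn
  set k := n / 4 with hk
  set r := n % 4 with hr
  have hr3 : r ≤ 3 := by omega
  have hn4 : n = 4 * k + r := by omega
  set A := {v : List Bool // v.length = n ∧ ∃ w : List Bool, a (v ++ w) ≠ a v ++ w}
  haveI : Finite (List.Vector Bool n) := inferInstanceAs (Finite (List.Vector Bool n))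
  haveI : Finite A := by
    apply Finite.of_injective (β := List.Vector Bool n) (fun x : A => ⟨x.1, x.2.1⟩)
    intro x y h
    exact Subtype.ext (congrArg List.Vector.toList h)
  -- injection from vectors of length k into A
  have hinj : ∃ F : List.Vector Bool k → A, Function.Injective F := by
    refine ⟨fun s => ⟨enc s.1 ++ pad r, ?_, ?_⟩, ?_⟩
    · rw [List.length_append, enc_length, s.2, pad_length r hr3]; omega
    · apply nontrivial_section
      rw [stateAfter_append, stateAfter_enc]
      exact stateAfter_pad r hr3
    · intro s t h
      have h' : enc s.1 ++ pad r = enc t.1 ++ pad r := congrArg Subtype.val h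
      have := List.append_inj_left h' (by rw [enc_length, enc_length, s.2, t.2])
      exact Subtype.ext (enc_injective this)
  obtain ⟨F, hF⟩ := hinj
  have hcard : 2 ^ k ≤ Nat.card A := by
    have h1 : Nat.card (List.Vector Bool k) ≤ Nat.card A :=
      Nat.card_le_card_of_injective F hF
    have h2 : Nat.card (List.Vector Bool k) = 2 ^ k := by
      rw [Nat.card_eq_fintype_card, card_vector, Fintype.card_bool]
    omega
  have hcast : ((2:ℝ)) ^ k ≤ (Nat.card A : ℝ) := by
    calc ((2:ℝ)) ^ k = ((2 ^ k : ℕ) : ℝ) := by push_cast; ring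
    _ ≤ (Nat.card A : ℝ) := Nat.cast_le.mpr hcard
  refine le_trans ?_ hcast
  have hpow : ((2:ℝ) ^ ((4:ℝ)⁻¹)) ^ n = (2:ℝ) ^ ((4:ℝ)⁻¹ * n) := by
    rw [← Real.rpow_natCast ((2:ℝ) ^ ((4:ℝ)⁻¹)) n, ← Real.rpow_mul (by norm_num)]
  rw [hpow]
  have hexp : (4:ℝ)⁻¹ * n ≤ ((k + 1 : ℕ) : ℝ) := by
    have hnk : (n : ℝ) ≤ 4 * ((k:ℝ) + 1) := by exact_mod_cast (show n ≤ 4*(k+1) by omega)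
    push_cast
    linarith
  have h2 : (2:ℝ) ^ ((4:ℝ)⁻¹ * n) ≤ (2:ℝ) ^ ((k + 1 : ℕ) : ℝ) :=
    Real.rpow_le_rpow_of_exponent_le (by norm_num) hexp
  have h3 : (2:ℝ) ^ ((k + 1 : ℕ) : ℝ) = 2 * 2 ^ k := by
    rw [Real.rpow_natCast]; ring
  nlinarith [h2, h3]

end BVTree
end
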